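/- Suppose P is symmetric with P ≥ Iₙ (i.e., P − Iₙ is positive semidefinite) and a matrix F ∈ ℝ^{n×n} satisfies F P Fᵀ − P + Iₙ ≤ 0 (negative semidefinite). Then the spectral radius of F is strictly less than 1. -/

import Mathlib

open Matrix ComplexOrder

lemma psd_map_ofReal {n : ℕ} {M : Matrix (Fin n) (Fin n) ℝ} (h : M.PosSemidef) :
    (M.map (Complex.ofReal)).PosSemidef := by
  obtain ⟨B, rfl⟩ : ∃ B : Matrix (Fin n) (Fin n) ℝ, M = Bᴴ * B := by
    open scoped MatrixOrder in
    exact ⟨CFC.sqrt M, by rw [← star_eq_conjTranspose, (CFC.sqrt_nonneg M).isSelfAdjoint.star_eq, CFC.sqrt_mul_sqrt_self M h.nonneg]⟩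
  have key : (Bᴴ * B).map (Complex.ofReal)
      = (B.map Complex.ofReal)ᴴ * (B.map Complex.ofReal) := by
    ext i j
    simp [Matrix.mul_apply, Matrix.map_apply, conjTranspose_apply, Complex.conj_ofReal]
  rw [key]
  exact posSemidef_conjTranspose_mul_self _

theorem stmt_8 (n : ℕ) (P F : Matrix (Fin n) (Fin n) ℝ) (hP : Pᵀ = P)
    (hPge : (P - 1).PosSemidef)
    (hlyap : (P - F * P * Fᵀ - 1).PosSemidef) :
    ∀ μ ∈ spectrum ℂ (F.map (Complex.ofReal)), ‖μ‖ < 1 := by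
  intro μ hμ
  set G := F.map Complex.ofReal with hG
  set Q := P.map Complex.ofReal with hQ
  -- get an eigenvector of Gᴴ with eigenvalue star μ
  rw [spectrum.mem_iff] at hμ
  have hdet : (algebraMap ℂ (Matrix (Fin n) (Fin n) ℂ) μ - G).det = 0 := by
    by_contra hne
    exact hμ ((Matrix.isUnit_iff_isUnit_det _).mpr (Ne.isUnit hne))
  have hdet' : ((algebraMap ℂ (Matrix (Fin n) (Fin n) ℂ) μ - G)ᴴ).det = 0 := by
    rw [Matrix.det_conjTranspose, hdet, star_zero]
  obtain ⟨v, hv0, hv⟩ := (Matrix.exists_mulVec_eq_zero_iff).mpr hdet'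
  have heig : Gᴴ *ᵥ v = (starRingEnd ℂ μ) • v := by
    have h1 : (algebraMap ℂ (Matrix (Fin n) (Fin n) ℂ) μ - G)ᴴ
        = algebraMap ℂ (Matrix (Fin n) (Fin n) ℂ) (starRingEnd ℂ μ) - Gᴴ := by
      rw [conjTranspose_sub]
      congr 1
      simp [Matrix.algebraMap_eq_diagonal, diagonal_conjTranspose]
    rw [h1, sub_mulVec, sub_eq_zero] at hv
    rw [← hv]
    ext i
    simp [Matrix.algebraMap_eq_diagonal, mulVec_diagonal]
  -- complexified hypotheses
  have hQ1 : (Q - 1).PosSemidef := by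
    have h := psd_map_ofReal hPge
    have e : (P - 1).map Complex.ofReal = Q - 1 := by
      ext i j
      by_cases hij : i = j <;>
        simp [Matrix.map_apply, Matrix.one_apply, hij, hQ]
    rwa [e] at h
  have hL : (Q - G * Q * Gᴴ - 1).PosSemidef := by
    have h := psd_map_ofReal hlyap
    have hGH : Gᴴ = Fᵀ.map Complex.ofReal := by
      ext i j; simp [conjTranspose_apply, Matrix.map_apply, Complex.conj_ofReal, hG]
    have e : (P - F * P * Fᵀ - 1).map Complex.ofReal = Q - G * Q * Gᴴ - 1 := by
      ext i j
      by_cases hij : i = j <;>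
        simp [Matrix.map_apply, Matrix.one_apply, hij, hGH, hG, hQ, Matrix.mul_apply,
          Finset.mul_sum, Finset.sum_mul]
    rwa [e] at h
  -- quadratic forms
  set a : ℂ := star v ⬝ᵥ Q *ᵥ v with ha
  set s : ℂ := star v ⬝ᵥ v with hs
  have hGQG : star v ⬝ᵥ (G * Q * Gᴴ) *ᵥ v = μ * (starRingEnd ℂ μ * a) := by
    have h1 : (G * Q * Gᴴ) *ᵥ v = G *ᵥ (Q *ᵥ (Gᴴ *ᵥ v)) := by
      rw [← mulVec_mulVec, ← mulVec_mulVec]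
    rw [h1, dotProduct_mulVec (star v) G]
    have h2 : star v ᵥ* G = star (Gᴴ *ᵥ v) := by
      rw [star_mulVec, conjTranspose_conjTranspose]
    rw [h2, heig]
    rw [show star ((starRingEnd ℂ μ) • v) ⬝ᵥ Q *ᵥ ((starRingEnd ℂ μ) • v)
        = μ * (starRingEnd ℂ μ * (star v ⬝ᵥ Q *ᵥ v)) by
      simp [star_smul, smul_dotProduct, mulVec_smul, dotProduct_smul, smul_eq_mul]; ring]
  have hs_pos : 0 < s.re := by
    have h0 : (0 : ℂ) ≤ s := by
      have := (Matrix.PosSemidef.one (n := Fin n) (R := ℂ)).dotProduct_mulVec_nonneg v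
      rwa [one_mulVec] at this
    have hne : s ≠ 0 := fun h => hv0 (dotProduct_star_self_eq_zero.mp h)
    have hlt : (0 : ℂ) < s := lt_of_le_of_ne h0 (Ne.symm hne)
    exact (Complex.lt_def.mp hlt).1
  have hQle : 0 ≤ (a - s).re := by
    have h := hQ1.dotProduct_mulVec_nonneg v
    have e : star v ⬝ᵥ (Q - 1) *ᵥ v = a - s := by
      rw [sub_mulVec, dotProduct_sub, one_mulVec]
    rw [e] at h
    exact (Complex.le_def.mp h).1
  have hLre : 0 ≤ (a - μ * (starRingEnd ℂ μ * a) - s).re := by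
    have h := hL.dotProduct_mulVec_nonneg v
    have e : star v ⬝ᵥ (Q - G * Q * Gᴴ - 1) *ᵥ v = a - μ * (starRingEnd ℂ μ * a) - s := by
      rw [sub_mulVec, sub_mulVec, dotProduct_sub, dotProduct_sub, one_mulVec, hGQG]
    rw [e] at h
    exact (Complex.le_def.mp h).1
  -- turn into real inequalities
  have hms : μ * starRingEnd ℂ μ = ((‖μ‖ ^ 2 : ℝ) : ℂ) := by
    rw [Complex.mul_conj, Complex.normSq_eq_norm_sq]
  have hmul : (μ * (starRingEnd ℂ μ * a)).re = ‖μ‖ ^ 2 * a.re := by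
    rw [← mul_assoc, hms, Complex.re_ofReal_mul]
  have h1 : 0 ≤ a.re - ‖μ‖ ^ 2 * a.re - s.re := by
    simp only [Complex.sub_re] at hLre
    rw [hmul] at hLre
    linarith
  have h2 : s.re ≤ a.re := by
    simp only [Complex.sub_re] at hQle; linarith
  have hnorm : (0:ℝ) ≤ ‖μ‖ := norm_nonneg _
  nlinarith [hs_pos, h1, h2, sq_nonneg (‖μ‖ - 1), sq_nonneg (‖μ‖ + 1)]
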